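/- Let A be an ordered alphabet. The monoid Ant°(A*) of non-empty antichains of A* under concatenation is a free monoid; likewise the monoid of non-empty finite antichains is free. -/

import Mathlib

/-- The Higman (subword) ordering on words over an ordered alphabet `A`. -/
def Hig {A : Type*} [PartialOrder A] (u v : List A) : Prop :=
  List.SublistForall₂ (· ≤ ·) u v

/-- Elementwise concatenation of languages. -/
def conc {A : Type*} (X Y : Set (List A)) : Set (List A) :=
  Set.image2 (· ++ ·) X Y

/-- A final segment (upward closed set) of `A*` for the Higman ordering. -/
def IsFinal {A : Type*} [PartialOrder A] (F : Set (List A)) : Prop :=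
  ∀ ⦃a b : List A⦄, Hig a b → a ∈ F → b ∈ F

/-- Upward closure of a set of words. -/
def upset {A : Type*} [PartialOrder A] (X : Set (List A)) : Set (List A) :=
  {b | ∃ a ∈ X, Hig a b}

/-- The set of minimal elements of a set of words. -/
def minSet {A : Type*} [PartialOrder A] (X : Set (List A)) : Set (List A) :=
  {x | x ∈ X ∧ ∀ y ∈ X, Hig y x → y = x}

/-- An antichain of words for the Higman ordering. -/
def IsAnti {A : Type*} [PartialOrder A] (U : Set (List A)) : Prop :=
  ∀ x ∈ U, ∀ y ∈ U, x ≠ y → ¬ Hig x y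

/-- An irreducible member of the monoid of antichains. -/
def IrredAnti {A : Type*} [PartialOrder A] (U : Set (List A)) : Prop :=
  U ≠ ({([] : List A)} : Set (List A)) ∧
    ∀ X Y : Set (List A), IsAnti X → IsAnti Y → U = conc X Y → U = X ∨ U = Y

/-- An irreducible member of the monoid of finite antichains. -/
def IrredFinAnti {A : Type*} [PartialOrder A] (U : Set (List A)) : Prop :=
  U ≠ ({([] : List A)} : Set (List A)) ∧
    ∀ X Y : Set (List A), IsAnti X → X.Finite → IsAnti Y → Y.Finite →
      U = conc X Y → U = X ∨ U = Y



section HigBasics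
variable {A : Type*} [PartialOrder A]

theorem hig_refl (u : List A) : Hig u u := refl_of (List.SublistForall₂ (· ≤ ·)) u

theorem hig_trans {u v w : List A} (h1 : Hig u v) (h2 : Hig v w) : Hig u w :=
  trans_of (List.SublistForall₂ (· ≤ ·)) h1 h2

theorem hig_nil (u : List A) : Hig [] u := List.SublistForall₂.nil

theorem sublist_hig {u v : List A} (h : List.Sublist u v) : Hig u v := h.sublistForall₂

theorem hig_nil_right {u : List A} (h : Hig u []) : u = [] := by
  cases h; rfl

theorem hig_append {u₁ u₂ v₁ v₂ : List A} (h1 : Hig u₁ v₁) (h2 : Hig u₂ v₂) :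
    Hig (u₁ ++ u₂) (v₁ ++ v₂) := by
  induction h1 with
  | nil =>
    rename_i l
    induction l with
    | nil => exact h2
    | cons a l ih => exact List.SublistForall₂.cons_right ih
  | cons hab _ ih => exact List.SublistForall₂.cons hab ih
  | cons_right _ ih => exact List.SublistForall₂.cons_right ih

theorem hig_reverse {u v : List A} (h : Hig u v) : Hig u.reverse v.reverse := by
  induction h with
  | nil => exact hig_nil _
  | cons hab _ ih =>
    simpa using hig_append ih (List.SublistForall₂.cons hab List.SublistForall₂.nil)
  | cons_right _ ih =>
    simpa using hig_append ih (hig_nil _)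

theorem hig_cons_cancel {a b : A} {x y : List A} (h : Hig (a :: x) (b :: y)) : Hig x y := by
  cases h with
  | cons _ h => exact h
  | cons_right h =>
    -- h : Hig (a :: x) y
    exact hig_trans (sublist_hig (List.sublist_cons_self a x)) h

theorem hig_append_left_cancel {u v w : List A} (h : Hig (u ++ v) (u ++ w)) : Hig v w := by
  induction u with
  | nil => exact h
  | cons a u ih => exact ih (hig_cons_cancel h)

theorem hig_append_right_cancel {u v w : List A} (h : Hig (v ++ u) (w ++ u)) : Hig v w := by
  have := hig_reverse h
  simp only [List.reverse_append] at this
  have := hig_append_left_cancel this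
  simpa using hig_reverse this

theorem hig_split {u v w : List A} (h : Hig (u ++ v) w) :
    ∃ w₁ w₂, w = w₁ ++ w₂ ∧ Hig u w₁ ∧ Hig v w₂ := by
  set l := u ++ v with hl
  clear_value l
  induction h generalizing u v with
  | nil =>
    obtain ⟨h1, h2⟩ := List.append_eq_nil_iff.mp hl.symm
    subst h1; subst h2
    exact ⟨[], _, rfl, hig_nil _, hig_nil _⟩
  | @cons a₁ a₂ l₁ l₂ hab hsub ih =>
    rcases u with _ | ⟨c, u⟩
    · simp only [List.nil_append] at hl
      subst hl
      exact ⟨[], a₂ :: l₂, rfl, hig_nil _, List.SublistForall₂.cons hab hsub⟩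
    · simp only [List.cons_append, List.cons.injEq] at hl
      obtain ⟨rfl, hl2⟩ := hl
      obtain ⟨w₁, w₂, rfl, h1, h2⟩ := ih hl2
      exact ⟨a₂ :: w₁, w₂, rfl, List.SublistForall₂.cons hab h1, h2⟩
  | @cons_right a l₁ l₂ hsub ih =>
    obtain ⟨w₁, w₂, rfl, h1, h2⟩ := ih hl
    exact ⟨a :: w₁, w₂, rfl, List.SublistForall₂.cons_right h1, h2⟩

theorem hig_prefix {u v : List A} (h : u <+: v) : Hig u v := sublist_hig h.sublist

theorem hig_suffix {u v : List A} (h : u <:+ v) : Hig u v := sublist_hig h.sublist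

end HigBasics

set_option linter.unusedSectionVars false
section AntiStuff
variable {A : Type*} [PartialOrder A]





theorem anti_eq {U : Set (List A)} (hU : IsAnti U) {x y : List A} (hx : x ∈ U) (hy : y ∈ U)
    (h : Hig x y) : x = y := by
  by_contra hne
  exact hU x hx y hy hne h

theorem anti_nil_mem {U : Set (List A)} (hU : IsAnti U) (h : ([] : List A) ∈ U) :
    U = {([] : List A)} := by
  ext w
  simp only [Set.mem_singleton_iff]
  exact ⟨fun hw => (anti_eq hU h hw (hig_nil w)).symm, fun hw => hw ▸ h⟩

theorem conc_mem {X Y : Set (List A)} {x y : List A} (hx : x ∈ X) (hy : y ∈ Y) :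
    x ++ y ∈ conc X Y := ⟨x, hx, y, hy, rfl⟩

theorem conc_nonempty {X Y : Set (List A)} (hX : X.Nonempty) (hY : Y.Nonempty) :
    (conc X Y).Nonempty := by
  obtain ⟨x, hx⟩ := hX; obtain ⟨y, hy⟩ := hY; exact ⟨x ++ y, conc_mem hx hy⟩

theorem conc_assoc (X Y Z : Set (List A)) : conc (conc X Y) Z = conc X (conc Y Z) := by
  ext w
  constructor
  · rintro ⟨_, ⟨x, hx, y, hy, rfl⟩, z, hz, rfl⟩
    exact ⟨x, hx, y ++ z, conc_mem hy hz, by simp⟩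
  · rintro ⟨x, hx, _, ⟨y, hy, z, hz, rfl⟩, rfl⟩
    exact ⟨x ++ y, conc_mem hx hy, z, hz, by simp⟩

@[simp] theorem conc_nil_left (X : Set (List A)) : conc ({([] : List A)} : Set (List A)) X = X := by
  simp [conc]

@[simp] theorem conc_nil_right (X : Set (List A)) : conc X ({([] : List A)} : Set (List A)) = X := by
  simp [conc]

/-- Prefix comparability of two splits of the same word. -/
theorem split_prefix {x₁ y₁ x₂ y₂ : List A} (h : x₁ ++ y₁ = x₂ ++ y₂) :
    (∃ m, x₂ = x₁ ++ m ∧ y₁ = m ++ y₂) ∨ (∃ m, x₁ = x₂ ++ m ∧ y₂ = m ++ y₁) := by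
  rcases List.append_eq_append_iff.mp h with ⟨m, hm1, hm2⟩ | ⟨m, hm1, hm2⟩
  · exact Or.inl ⟨m, hm1, hm2⟩
  · exact Or.inr ⟨m, hm1, hm2⟩

/-- Unique splitting of a word in a product, given `X` antichain. -/
theorem split_unique {X : Set (List A)} (hX : IsAnti X) {x₁ x₂ y₁ y₂ : List A}
    (hx₁ : x₁ ∈ X) (hx₂ : x₂ ∈ X) (h : x₁ ++ y₁ = x₂ ++ y₂) : x₁ = x₂ ∧ y₁ = y₂ := by
  rcases split_prefix h with ⟨m, hm1, hm2⟩ | ⟨m, hm1, hm2⟩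
  · have : x₁ = x₂ := anti_eq hX hx₁ hx₂ (by rw [hm1]; exact hig_prefix ⟨m, rfl⟩)
    refine ⟨this, ?_⟩
    rw [this] at h
    exact List.append_cancel_left h
  · have : x₂ = x₁ := anti_eq hX hx₂ hx₁ (by rw [hm1]; exact hig_prefix ⟨m, rfl⟩)
    refine ⟨this.symm, ?_⟩
    rw [← this] at h
    exact List.append_cancel_left h

/-- Key compatibility: in a product of antichains, Higman comparability of products forces
componentwise equality. -/
theorem prod_compat {X Y : Set (List A)} (hX : IsAnti X) (hY : IsAnti Y)
    {x₁ y₁ x₂ y₂ : List A} (hx₁ : x₁ ∈ X) (hx₂ : x₂ ∈ X) (hy₁ : y₁ ∈ Y) (hy₂ : y₂ ∈ Y)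
    (h : Hig (x₁ ++ y₁) (x₂ ++ y₂)) : x₁ = x₂ ∧ y₁ = y₂ := by
  obtain ⟨w₁, w₂, hw, h1, h2⟩ := hig_split h
  rcases split_prefix hw with ⟨m, hm1, hm2⟩ | ⟨m, hm1, hm2⟩
  -- hw : x₂ ++ y₂ = w₁ ++ w₂
  · -- w₁ = x₂ ++ m, y₂ = m ++ w₂
    have hyy : y₁ = y₂ := anti_eq hY hy₁ hy₂ (hig_trans h2 (by rw [hm2]; exact hig_suffix ⟨m, rfl⟩))
    rw [← hyy] at h
    exact ⟨anti_eq hX hx₁ hx₂ (hig_append_right_cancel h), hyy⟩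
  · -- x₂ = w₁ ++ m, w₂ = m ++ y₂
    have hxx : x₁ = x₂ := anti_eq hX hx₁ hx₂ (hig_trans h1 (by rw [hm1]; exact hig_prefix ⟨m, rfl⟩))
    rw [← hxx] at h
    exact ⟨hxx, anti_eq hY hy₁ hy₂ (hig_append_left_cancel h)⟩

theorem conc_anti {X Y : Set (List A)} (hX : IsAnti X) (hY : IsAnti Y) :
    IsAnti (conc X Y) := by
  rintro _ ⟨x₁, hx₁, y₁, hy₁, rfl⟩ _ ⟨x₂, hx₂, y₂, hy₂, rfl⟩ hne h
  obtain ⟨h1, h2⟩ := prod_compat hX hY hx₁ hx₂ hy₁ hy₂ h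
  exact hne (by rw [h1, h2])

theorem conc_left_cancel_aux {X Z W : Set (List A)} (hXne : X.Nonempty)
    (hanti : IsAnti (conc X Z)) (h : conc X Z = conc X W) : Z ⊆ W := by
  obtain ⟨x, hx, hxlen⟩ := Nat.sInf_mem (hXne.image List.length)
  have hxmin : ∀ x' ∈ X, x.length ≤ x'.length := fun x' hx' => by
    rw [hxlen]; exact Nat.sInf_le ⟨x', hx', rfl⟩
  intro z hz
  have hmem : x ++ z ∈ conc X W := h ▸ conc_mem hx hz
  obtain ⟨x₂, hx₂, w, hw, heq⟩ := hmem
  rcases split_prefix heq.symm with ⟨m, hm1, hm2⟩ | ⟨m, hm1, hm2⟩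
  · -- x₂ = x ++ m, z = m ++ w
    have h1 : x ++ w ∈ conc X Z := h ▸ conc_mem hx hw
    have h2 : x ++ z ∈ conc X Z := conc_mem hx hz
    have : x ++ w = x ++ z :=
      anti_eq hanti h1 h2 (hig_append (hig_refl x) (by rw [hm2]; exact hig_suffix ⟨m, rfl⟩))
    have : w = z := List.append_cancel_left this
    exact this ▸ hw
  · -- x = x₂ ++ m, w = m ++ z
    have : m = [] := by
      have := hxmin x₂ hx₂
      rw [hm1, List.length_append] at this
      simpa using List.length_eq_zero_iff.mp (by omega)
    subst this
    simp only [List.append_nil] at hm1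
    simp only [List.nil_append] at hm2
    exact hm2 ▸ hw

/-- Left cancellation. -/
theorem conc_left_cancel {X Z W : Set (List A)} (hXne : X.Nonempty)
    (hanti : IsAnti (conc X Z)) (h : conc X Z = conc X W) : Z = W :=
  Set.Subset.antisymm (conc_left_cancel_aux hXne hanti h)
    (conc_left_cancel_aux hXne (h ▸ hanti) h.symm)



theorem nil_of_self_eq_append_left {t y : List A} (h : y = t ++ y) : t = [] := by
  have := congrArg List.length h
  simp only [List.length_append] at this
  exact List.length_eq_zero_iff.mp (by omega)

theorem levi_aux {X₁ Y₁ X₂ Y₂ : Set (List A)} (hX₁ : IsAnti X₁) (hX₂ : IsAnti X₂)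
    (hY₂ : IsAnti Y₂) (hX₁ne : X₁.Nonempty) (hX₂ne : X₂.Nonempty) (hY₂ne : Y₂.Nonempty)
    (hU : conc X₁ Y₁ = conc X₂ Y₂)
    (hP : ∀ x₁ ∈ X₁, ∀ y₁ ∈ Y₁, ∀ x₂ ∈ X₂, ∀ y₂ ∈ Y₂, x₁ ++ y₁ = x₂ ++ y₂ →
      ∃ m, x₂ = x₁ ++ m ∧ y₁ = m ++ y₂) :
    ∃ Z : Set (List A), Z.Nonempty ∧ IsAnti Z ∧ conc X₁ Z = X₂ ∧ conc Z Y₂ = Y₁ := by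
  set Z : Set (List A) := {m | ∃ x ∈ X₁, ∃ y ∈ Y₂, x ++ m ∈ X₂ ∧ m ++ y ∈ Y₁} with hZdef
  have key1 : ∀ x₁ ∈ X₁, ∀ m ∈ Z, x₁ ++ m ∈ X₂ := by
    intro x₁ hx₁ m hm
    obtain ⟨xb, hxb, yb, hyb, hxm, hmy⟩ := hm
    have hv : x₁ ++ (m ++ yb) ∈ conc X₂ Y₂ := hU ▸ conc_mem hx₁ hmy
    obtain ⟨x₂, hx₂, y₂, hy₂, heq⟩ := hv
    obtain ⟨ms, hA, hB⟩ := hP x₁ hx₁ (m ++ yb) hmy x₂ hx₂ y₂ hy₂ heq.symm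
    -- hB : m ++ yb = ms ++ y₂
    rcases split_prefix hB with ⟨t, h1, h2⟩ | ⟨t, h1, h2⟩
    · -- ms = m ++ t, yb = t ++ y₂
      have : y₂ = yb := anti_eq hY₂ hy₂ hyb (by rw [h2]; exact hig_suffix ⟨t, rfl⟩)
      rw [this] at h2
      have ht : t = [] := nil_of_self_eq_append_left h2
      rw [ht, List.append_nil] at h1
      rw [← h1, ← hA]; exact hx₂
    · -- m = ms ++ t, y₂ = t ++ yb
      have : yb = y₂ := anti_eq hY₂ hyb hy₂ (by rw [h2]; exact hig_suffix ⟨t, rfl⟩)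
      rw [← this] at h2
      have ht : t = [] := nil_of_self_eq_append_left h2
      rw [ht, List.append_nil] at h1
      rw [h1, ← hA]; exact hx₂
  have key2 : ∀ y ∈ Y₂, ∀ m ∈ Z, m ++ y ∈ Y₁ := by
    intro y hy m hm
    obtain ⟨xb, hxb, yb, hyb, hxm, hmy⟩ := hm
    have hv : (xb ++ m) ++ y ∈ conc X₁ Y₁ := hU.symm ▸ conc_mem hxm hy
    obtain ⟨x₁, hx₁, y₁, hy₁, heq⟩ := hv
    obtain ⟨ms, hA, hB⟩ := hP x₁ hx₁ y₁ hy₁ (xb ++ m) hxm y hy heq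
    -- hA : xb ++ m = x₁ ++ ms, hB : y₁ = ms ++ y
    rcases split_prefix hA with ⟨t, h1, h2⟩ | ⟨t, h1, h2⟩
    ·
      have : xb = x₁ := anti_eq hX₁ hxb hx₁ (by rw [h1]; exact hig_prefix ⟨t, rfl⟩)
      rw [← this] at h1
      have ht : t = [] := by
        have := congrArg List.length h1
        simp only [List.length_append] at this
        exact List.length_eq_zero_iff.mp (by omega)
      rw [ht, List.nil_append] at h2
      rw [← h2] at hB
      rw [← hB]; exact hy₁
    · -- xb = x₁ ++ t, m = t ++ ms
      have : x₁ = xb := anti_eq hX₁ hx₁ hxb (by rw [h1]; exact hig_prefix ⟨t, rfl⟩)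
      rw [← this] at h1
      have ht : t = [] := by
        have := congrArg List.length h1
        simp only [List.length_append] at this
        exact List.length_eq_zero_iff.mp (by omega)
      rw [ht, List.nil_append] at h2
      rw [h2] at hB
      rw [← hB]; exact hy₁
  have hX2eq : conc X₁ Z = X₂ := by
    apply Set.Subset.antisymm
    · rintro _ ⟨x₁, hx₁, m, hm, rfl⟩
      exact key1 x₁ hx₁ m hm
    · intro x₂ hx₂
      obtain ⟨y₂, hy₂⟩ := hY₂ne
      have hv : x₂ ++ y₂ ∈ conc X₁ Y₁ := hU.symm ▸ conc_mem hx₂ hy₂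
      obtain ⟨x₁, hx₁, y₁, hy₁, heq⟩ := hv
      obtain ⟨m, h1, h2⟩ := hP x₁ hx₁ y₁ hy₁ x₂ hx₂ y₂ hy₂ heq
      have hmZ : m ∈ Z := ⟨x₁, hx₁, y₂, hy₂, by rw [← h1]; exact hx₂, by rw [← h2]; exact hy₁⟩
      exact h1 ▸ conc_mem hx₁ hmZ
  have hY1eq : conc Z Y₂ = Y₁ := by
    apply Set.Subset.antisymm
    · rintro _ ⟨m, hm, y₂, hy₂, rfl⟩
      exact key2 y₂ hy₂ m hm
    · intro y₁ hy₁
      obtain ⟨x₁, hx₁⟩ := hX₁ne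
      have hv : x₁ ++ y₁ ∈ conc X₂ Y₂ := hU ▸ conc_mem hx₁ hy₁
      obtain ⟨x₂, hx₂, y₂, hy₂, heq⟩ := hv
      obtain ⟨m, h1, h2⟩ := hP x₁ hx₁ y₁ hy₁ x₂ hx₂ y₂ hy₂ heq.symm
      have hmZ : m ∈ Z := ⟨x₁, hx₁, y₂, hy₂, by rw [← h1]; exact hx₂, by rw [← h2]; exact hy₁⟩
      exact h2 ▸ conc_mem hmZ hy₂
  have hZne : Z.Nonempty := by
    obtain ⟨x₂, hx₂⟩ := hX₂ne
    rw [← hX2eq] at hx₂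
    obtain ⟨x₁, _, m, hm, _⟩ := hx₂
    exact ⟨m, hm⟩
  refine ⟨Z, hZne, ?_, hX2eq, hY1eq⟩
  intro m hm m' hm' hne hig
  obtain ⟨x₁, hx₁⟩ := hX₁ne
  have h1 := key1 x₁ hx₁ m hm
  have h2 := key1 x₁ hx₁ m' hm'
  exact hX₂ (x₁ ++ m) h1 (x₁ ++ m') h2 (fun h => hne (List.append_cancel_left h))
    (hig_append (hig_refl x₁) hig)

theorem levi {X₁ Y₁ X₂ Y₂ : Set (List A)} (hX₁ : IsAnti X₁) (hY₁ : IsAnti Y₁)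
    (hX₂ : IsAnti X₂) (hY₂ : IsAnti Y₂) (hX₁ne : X₁.Nonempty) (hY₁ne : Y₁.Nonempty)
    (hX₂ne : X₂.Nonempty) (hY₂ne : Y₂.Nonempty) (hU : conc X₁ Y₁ = conc X₂ Y₂) :
    ∃ Z : Set (List A), Z.Nonempty ∧ IsAnti Z ∧
      ((conc X₁ Z = X₂ ∧ conc Z Y₂ = Y₁) ∨ (conc X₂ Z = X₁ ∧ conc Z Y₁ = Y₂)) := by
  by_cases hP1 : ∀ x₁ ∈ X₁, ∀ y₁ ∈ Y₁, ∀ x₂ ∈ X₂, ∀ y₂ ∈ Y₂, x₁ ++ y₁ = x₂ ++ y₂ →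
      ∃ m, x₂ = x₁ ++ m ∧ y₁ = m ++ y₂
  · obtain ⟨Z, h1, h2, h3, h4⟩ := levi_aux hX₁ hX₂ hY₂ hX₁ne hX₂ne hY₂ne hU hP1
    exact ⟨Z, h1, h2, Or.inl ⟨h3, h4⟩⟩
  · push_neg at hP1
    obtain ⟨a₁, ha₁, b₁, hb₁, a₂, ha₂, b₂, hb₂, heq, hno⟩ := hP1
    -- get strict witness in the other direction
    obtain ⟨m', hm'1, hm'2⟩ : ∃ m', a₁ = a₂ ++ m' ∧ b₂ = m' ++ b₁ := by
      rcases split_prefix heq with ⟨m, hA, hB⟩ | h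
      · exact absurd hB (hno m hA)
      · exact h
    have hm'ne : m' ≠ [] := by
      rintro rfl
      simp only [List.append_nil] at hm'1
      simp only [List.nil_append] at hm'2
      exact hno [] (by rw [hm'1, List.append_nil]) (by rw [hm'2, List.nil_append])
    have hUanti : IsAnti (conc X₁ Y₁) := conc_anti hX₁ hY₁
    have hP2 : ∀ x₂ ∈ X₂, ∀ y₂ ∈ Y₂, ∀ x₁ ∈ X₁, ∀ y₁ ∈ Y₁, x₂ ++ y₂ = x₁ ++ y₁ →
        ∃ m, x₁ = x₂ ++ m ∧ y₂ = m ++ y₁ := by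
      intro x₂ hx₂ y₂ hy₂ x₁ hx₁ y₁ hy₁ heq2
      rcases split_prefix heq2.symm with ⟨m, h1, h2⟩ | ⟨m, h1, h2⟩
      · -- x₂ = x₁ ++ m, y₁ = m ++ y₂ : forbidden direction unless m = []
        by_cases hm : m = []
        · subst hm
          simp only [List.append_nil] at h1
          simp only [List.nil_append] at h2
          exact ⟨[], by rw [h1, List.append_nil], by rw [h2, List.nil_append]⟩
        · exfalso
          have hu' : x₁ ++ b₁ ∈ conc X₁ Y₁ := conc_mem hx₁ hb₁
          have hu : x₁ ++ (m ++ (m' ++ b₁)) ∈ conc X₁ Y₁ := by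
            rw [hU]
            have : x₁ ++ (m ++ (m' ++ b₁)) = (x₁ ++ m) ++ (m' ++ b₁) := by simp
            rw [this, ← h1, ← hm'2]
            exact conc_mem hx₂ hb₂
          have hhig : Hig (x₁ ++ b₁) (x₁ ++ (m ++ (m' ++ b₁))) :=
            hig_append (hig_refl x₁) (hig_suffix ⟨m ++ m', by simp⟩)
          have := anti_eq hUanti hu' hu hhig
          have := congrArg List.length this
          simp only [List.length_append] at this
          have : m.length = 0 := by omega
          exact hm (List.length_eq_zero_iff.mp this)
      · exact ⟨m, h1, h2⟩
    obtain ⟨Z, h1, h2, h3, h4⟩ := levi_aux hX₂ hX₁ hY₁ hX₂ne hX₁ne hY₁ne hU.symm hP2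
    exact ⟨Z, h1, h2, Or.inr ⟨h3, h4⟩⟩

/-! ### Length function -/

noncomputable def wlen (U : Set (List A)) : ℕ := sInf (List.length '' U)

theorem wlen_mem {U : Set (List A)} (hU : U.Nonempty) : ∃ w ∈ U, w.length = wlen U :=
  Nat.sInf_mem (hU.image List.length)

theorem wlen_le {U : Set (List A)} {w : List A} (hw : w ∈ U) : wlen U ≤ w.length :=
  Nat.sInf_le ⟨w, hw, rfl⟩

theorem wlen_conc {X Y : Set (List A)} (hX : X.Nonempty) (hY : Y.Nonempty) :
    wlen (conc X Y) = wlen X + wlen Y := by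
  apply le_antisymm
  · obtain ⟨x, hx, hxl⟩ := wlen_mem hX
    obtain ⟨y, hy, hyl⟩ := wlen_mem hY
    have := wlen_le (conc_mem hx hy)
    simpa [hxl, hyl] using this
  · obtain ⟨w, hw, hwl⟩ := wlen_mem (conc_nonempty hX hY)
    obtain ⟨x, hx, y, hy, heq⟩ := hw
    have h1 := wlen_le hx
    have h2 := wlen_le hy
    have : x.length + y.length = w.length := by rw [← heq]; simp
    omega

theorem wlen_singleton_nil : wlen ({([] : List A)} : Set (List A)) = 0 := by
  have := wlen_le (U := ({([] : List A)} : Set (List A))) rfl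
  simpa using this

theorem wlen_eq_zero {U : Set (List A)} (hUa : IsAnti U) (hU : U.Nonempty) (h : wlen U = 0) :
    U = {([] : List A)} := by
  obtain ⟨w, hw, hwl⟩ := wlen_mem hU
  rw [h] at hwl
  have : w = [] := List.length_eq_zero_iff.mp hwl
  exact anti_nil_mem hUa (this ▸ hw)

theorem wlen_pos {U : Set (List A)} (hUa : IsAnti U) (hU : U.Nonempty)
    (h : U ≠ ({([] : List A)} : Set (List A))) : 1 ≤ wlen U := by
  by_contra hlt
  exact h (wlen_eq_zero hUa hU (by omega))

/-! ### Folds -/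

theorem anti_singleton_nil : IsAnti ({([] : List A)} : Set (List A)) := by
  intro x hx y hy hne
  rw [Set.mem_singleton_iff] at hx hy
  exact absurd (hx.trans hy.symm) hne

theorem fold_anti {l : List (Set (List A))} (h : ∀ G ∈ l, IsAnti G) :
    IsAnti (l.foldr conc ({([] : List A)} : Set (List A))) := by
  induction l with
  | nil => exact anti_singleton_nil
  | cons G t ih =>
    exact conc_anti (h G (List.mem_cons_self)) (ih fun G' hG' => h G' (List.mem_cons_of_mem _ hG'))

theorem fold_nonempty {l : List (Set (List A))} (h : ∀ G ∈ l, G.Nonempty) :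
    (l.foldr conc ({([] : List A)} : Set (List A))).Nonempty := by
  induction l with
  | nil => exact ⟨[], rfl⟩
  | cons G t ih =>
    exact conc_nonempty (h G (List.mem_cons_self))
      (ih fun G' hG' => h G' (List.mem_cons_of_mem _ hG'))

theorem fold_finite {l : List (Set (List A))} (h : ∀ G ∈ l, Set.Finite G) :
    (l.foldr conc ({([] : List A)} : Set (List A))).Finite := by
  induction l with
  | nil => exact Set.finite_singleton _
  | cons G t ih =>
    exact Set.Finite.image2 _ (h G (List.mem_cons_self))
      (ih fun G' hG' => h G' (List.mem_cons_of_mem _ hG'))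

theorem fold_base {l : List (Set (List A))} (B : Set (List A)) :
    l.foldr conc B = conc (l.foldr conc ({([] : List A)} : Set (List A))) B := by
  induction l with
  | nil => simp
  | cons G t ih => simp only [List.foldr_cons, ih, conc_assoc]

theorem fold_append (l₁ l₂ : List (Set (List A))) :
    (l₁ ++ l₂).foldr conc ({([] : List A)} : Set (List A)) =
      conc (l₁.foldr conc ({([] : List A)} : Set (List A)))
        (l₂.foldr conc ({([] : List A)} : Set (List A))) := by
  rw [List.foldr_append, fold_base]

theorem ne_nil_singleton_of_conc {X Y : Set (List A)} (hX : X.Nonempty) (hY : Y.Nonempty)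
    (hXa : IsAnti X) (hU : conc X Y = ({([] : List A)} : Set (List A)))
    (hXne : X ≠ ({([] : List A)} : Set (List A))) : False := by
  obtain ⟨x, hx⟩ := hX
  obtain ⟨y, hy⟩ := hY
  have : x ++ y ∈ ({([] : List A)} : Set (List A)) := hU ▸ conc_mem hx hy
  rw [Set.mem_singleton_iff, List.append_eq_nil_iff] at this
  exact hXne (anti_nil_mem hXa (this.1 ▸ hx))

/-! ### Finiteness transfer -/

theorem finite_of_conc_eq {X W V : Set (List A)} (h : conc X W = V) (hV : V.Finite)
    (hX : X.Nonempty) : W.Finite := by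
  obtain ⟨x, hx⟩ := hX
  apply Set.Finite.of_finite_image (f := (x ++ ·))
  · apply hV.subset
    rintro _ ⟨w, hw, rfl⟩
    exact h ▸ conc_mem hx hw
  · intro a _ b _ hab
    exact List.append_cancel_left hab

/-! ### Existence -/

theorem exists_fact : ∀ n : ℕ, ∀ U : Set (List A), IsAnti U → U.Nonempty → wlen U = n →
    ∃ l : List (Set (List A)),
      (∀ G ∈ l, IsAnti G ∧ G.Nonempty ∧ IrredAnti G) ∧
      l.foldr conc ({([] : List A)} : Set (List A)) = U := by
  intro n
  induction n using Nat.strong_induction_on with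
  | _ n IH =>
    intro U hUa hUne hlen
    by_cases hU0 : U = ({([] : List A)} : Set (List A))
    · exact ⟨[], by simp, hU0.symm⟩
    by_cases hirr : IrredAnti U
    · exact ⟨[U], by simp [hUa, hUne, hirr], by simp⟩
    · have : ¬∀ X Y : Set (List A), IsAnti X → IsAnti Y → U = conc X Y → U = X ∨ U = Y := by
        intro h; exact hirr ⟨hU0, h⟩
      push_neg at this
      obtain ⟨X, Y, hXa, hYa, hUXY, hneX, hneY⟩ := this
      have hXne : X.Nonempty := by
        obtain ⟨u, hu⟩ := hUne
        obtain ⟨x, hx, y, hy, _⟩ := hUXY ▸ hu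
        exact ⟨x, hx⟩
      have hYne : Y.Nonempty := by
        obtain ⟨u, hu⟩ := hUne
        obtain ⟨x, hx, y, hy, _⟩ := hUXY ▸ hu
        exact ⟨y, hy⟩
      have hX0 : X ≠ ({([] : List A)} : Set (List A)) := by
        rintro rfl
        rw [conc_nil_left] at hUXY
        exact hneY hUXY
      have hY0 : Y ≠ ({([] : List A)} : Set (List A)) := by
        rintro rfl
        rw [conc_nil_right] at hUXY
        exact hneX hUXY
      have hadd : wlen X + wlen Y = n := by rw [← hlen, hUXY, wlen_conc hXne hYne]
      have h1 := wlen_pos hXa hXne hX0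
      have h2 := wlen_pos hYa hYne hY0
      obtain ⟨lX, hlX, hlXf⟩ := IH (wlen X) (by omega) X hXa hXne rfl
      obtain ⟨lY, hlY, hlYf⟩ := IH (wlen Y) (by omega) Y hYa hYne rfl
      refine ⟨lX ++ lY, ?_, ?_⟩
      · intro G hG
        rcases List.mem_append.mp hG with h | h
        · exact hlX G h
        · exact hlY G h
      · rw [fold_append, hlXf, hlYf, hUXY]

theorem exists_fact_fin : ∀ n : ℕ, ∀ U : Set (List A), IsAnti U → U.Nonempty → U.Finite →
    wlen U = n →
    ∃ l : List (Set (List A)),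
      (∀ G ∈ l, IsAnti G ∧ G.Nonempty ∧ G.Finite ∧ IrredFinAnti G) ∧
      l.foldr conc ({([] : List A)} : Set (List A)) = U := by
  intro n
  induction n using Nat.strong_induction_on with
  | _ n IH =>
    intro U hUa hUne hUfin hlen
    by_cases hU0 : U = ({([] : List A)} : Set (List A))
    · exact ⟨[], by simp, hU0.symm⟩
    by_cases hirr : IrredFinAnti U
    · exact ⟨[U], by simp [hUa, hUne, hUfin, hirr], by simp⟩
    · have : ¬∀ X Y : Set (List A), IsAnti X → X.Finite → IsAnti Y → Y.Finite →
          U = conc X Y → U = X ∨ U = Y := by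
        intro h; exact hirr ⟨hU0, h⟩
      push_neg at this
      obtain ⟨X, Y, hXa, hXf, hYa, hYf, hUXY, hneX, hneY⟩ := this
      have hXne : X.Nonempty := by
        obtain ⟨u, hu⟩ := hUne
        obtain ⟨x, hx, y, hy, _⟩ := hUXY ▸ hu
        exact ⟨x, hx⟩
      have hYne : Y.Nonempty := by
        obtain ⟨u, hu⟩ := hUne
        obtain ⟨x, hx, y, hy, _⟩ := hUXY ▸ hu
        exact ⟨y, hy⟩
      have hX0 : X ≠ ({([] : List A)} : Set (List A)) := by
        rintro rfl
        rw [conc_nil_left] at hUXY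
        exact hneY hUXY
      have hY0 : Y ≠ ({([] : List A)} : Set (List A)) := by
        rintro rfl
        rw [conc_nil_right] at hUXY
        exact hneX hUXY
      have hadd : wlen X + wlen Y = n := by rw [← hlen, hUXY, wlen_conc hXne hYne]
      have h1 := wlen_pos hXa hXne hX0
      have h2 := wlen_pos hYa hYne hY0
      obtain ⟨lX, hlX, hlXf⟩ := IH (wlen X) (by omega) X hXa hXne hXf rfl
      obtain ⟨lY, hlY, hlYf⟩ := IH (wlen Y) (by omega) Y hYa hYne hYf rfl
      refine ⟨lX ++ lY, ?_, ?_⟩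
      · intro G hG
        rcases List.mem_append.mp hG with h | h
        · exact hlX G h
        · exact hlY G h
      · rw [fold_append, hlXf, hlYf, hUXY]

/-! ### Uniqueness -/

theorem fold_ne_nil_sing {H : Set (List A)} {t : List (Set (List A))}
    (hHa : IsAnti H) (hHne : H.Nonempty) (hH0 : H ≠ ({([] : List A)} : Set (List A)))
    (htne : (t.foldr conc ({([] : List A)} : Set (List A))).Nonempty)
    (h : (H :: t).foldr conc ({([] : List A)} : Set (List A)) =
      ({([] : List A)} : Set (List A))) : False := by
  rw [List.foldr_cons] at h
  exact ne_nil_singleton_of_conc hHne htne hHa h hH0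

theorem uniq_fact : ∀ l₁ l₂ : List (Set (List A)),
    (∀ G ∈ l₁, IsAnti G ∧ G.Nonempty ∧ IrredAnti G) →
    (∀ G ∈ l₂, IsAnti G ∧ G.Nonempty ∧ IrredAnti G) →
    l₁.foldr conc ({([] : List A)} : Set (List A)) =
      l₂.foldr conc ({([] : List A)} : Set (List A)) → l₁ = l₂ := by
  intro l₁
  induction l₁ with
  | nil =>
    intro l₂ _ h₂ hfold
    cases l₂ with
    | nil => rfl
    | cons H t₂ =>
      obtain ⟨hHa, hHne, hHirr⟩ := h₂ H (List.mem_cons_self)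
      exact (fold_ne_nil_sing hHa hHne hHirr.1
        (fold_nonempty fun G hG => (h₂ G (List.mem_cons_of_mem _ hG)).2.1) hfold.symm).elim
  | cons G t₁ IH =>
    intro l₂ h₁ h₂ hfold
    obtain ⟨hGa, hGne, hGirr⟩ := h₁ G (List.mem_cons_self)
    have ht₁ : ∀ G' ∈ t₁, IsAnti G' ∧ G'.Nonempty ∧ IrredAnti G' :=
      fun G' hG' => h₁ G' (List.mem_cons_of_mem _ hG')
    have hR₁a : IsAnti (t₁.foldr conc ({([] : List A)} : Set (List A))) :=
      fold_anti fun G' hG' => (ht₁ G' hG').1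
    have hR₁ne : (t₁.foldr conc ({([] : List A)} : Set (List A))).Nonempty :=
      fold_nonempty fun G' hG' => (ht₁ G' hG').2.1
    cases l₂ with
    | nil =>
      exact (fold_ne_nil_sing hGa hGne hGirr.1 hR₁ne hfold).elim
    | cons H t₂ =>
      obtain ⟨hHa, hHne, hHirr⟩ := h₂ H (List.mem_cons_self)
      have ht₂ : ∀ G' ∈ t₂, IsAnti G' ∧ G'.Nonempty ∧ IrredAnti G' :=
        fun G' hG' => h₂ G' (List.mem_cons_of_mem _ hG')
      have hR₂a : IsAnti (t₂.foldr conc ({([] : List A)} : Set (List A))) :=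
        fold_anti fun G' hG' => (ht₂ G' hG').1
      have hR₂ne : (t₂.foldr conc ({([] : List A)} : Set (List A))).Nonempty :=
        fold_nonempty fun G' hG' => (ht₂ G' hG').2.1
      simp only [List.foldr_cons] at hfold
      obtain ⟨Z, hZne, hZa, hcase⟩ :=
        levi hGa hR₁a hHa hR₂a hGne hR₁ne hHne hR₂ne hfold
      have hhead : G = H := by
        rcases hcase with ⟨hz1, hz2⟩ | ⟨hz1, hz2⟩
        · rcases hHirr.2 G Z hGa hZa hz1.symm with h | h
          · exact h.symm
          · exfalso
            rw [h] at hz1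
            have := wlen_conc hGne hZne
            rw [hz1, ← h] at this
            have hG0 : wlen G = 0 := by omega
            exact hGirr.1 (wlen_eq_zero hGa hGne hG0)
        · rcases hGirr.2 H Z hHa hZa hz1.symm with h | h
          · exact h
          · exfalso
            rw [h] at hz1
            have := wlen_conc hHne hZne
            rw [hz1, ← h] at this
            have hH0 : wlen H = 0 := by omega
            exact hHirr.1 (wlen_eq_zero hHa hHne hH0)
      subst hhead
      have hRR : t₁.foldr conc ({([] : List A)} : Set (List A)) =
          t₂.foldr conc ({([] : List A)} : Set (List A)) :=
        conc_left_cancel hGne (conc_anti hGa hR₁a) hfold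
      rw [IH t₂ ht₁ ht₂ hRR]

theorem uniq_fact_fin : ∀ l₁ l₂ : List (Set (List A)),
    (∀ G ∈ l₁, IsAnti G ∧ G.Nonempty ∧ G.Finite ∧ IrredFinAnti G) →
    (∀ G ∈ l₂, IsAnti G ∧ G.Nonempty ∧ G.Finite ∧ IrredFinAnti G) →
    l₁.foldr conc ({([] : List A)} : Set (List A)) =
      l₂.foldr conc ({([] : List A)} : Set (List A)) → l₁ = l₂ := by
  intro l₁
  induction l₁ with
  | nil =>
    intro l₂ _ h₂ hfold
    cases l₂ with
    | nil => rfl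
    | cons H t₂ =>
      obtain ⟨hHa, hHne, hHf, hHirr⟩ := h₂ H (List.mem_cons_self)
      exact (fold_ne_nil_sing hHa hHne hHirr.1
        (fold_nonempty fun G hG => (h₂ G (List.mem_cons_of_mem _ hG)).2.1) hfold.symm).elim
  | cons G t₁ IH =>
    intro l₂ h₁ h₂ hfold
    obtain ⟨hGa, hGne, hGf, hGirr⟩ := h₁ G (List.mem_cons_self)
    have ht₁ : ∀ G' ∈ t₁, IsAnti G' ∧ G'.Nonempty ∧ G'.Finite ∧ IrredFinAnti G' :=
      fun G' hG' => h₁ G' (List.mem_cons_of_mem _ hG')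
    have hR₁a : IsAnti (t₁.foldr conc ({([] : List A)} : Set (List A))) :=
      fold_anti fun G' hG' => (ht₁ G' hG').1
    have hR₁ne : (t₁.foldr conc ({([] : List A)} : Set (List A))).Nonempty :=
      fold_nonempty fun G' hG' => (ht₁ G' hG').2.1
    cases l₂ with
    | nil =>
      exact (fold_ne_nil_sing hGa hGne hGirr.1 hR₁ne hfold).elim
    | cons H t₂ =>
      obtain ⟨hHa, hHne, hHf, hHirr⟩ := h₂ H (List.mem_cons_self)
      have ht₂ : ∀ G' ∈ t₂, IsAnti G' ∧ G'.Nonempty ∧ G'.Finite ∧ IrredFinAnti G' :=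
        fun G' hG' => h₂ G' (List.mem_cons_of_mem _ hG')
      have hR₂a : IsAnti (t₂.foldr conc ({([] : List A)} : Set (List A))) :=
        fold_anti fun G' hG' => (ht₂ G' hG').1
      have hR₂ne : (t₂.foldr conc ({([] : List A)} : Set (List A))).Nonempty :=
        fold_nonempty fun G' hG' => (ht₂ G' hG').2.1
      simp only [List.foldr_cons] at hfold
      obtain ⟨Z, hZne, hZa, hcase⟩ :=
        levi hGa hR₁a hHa hR₂a hGne hR₁ne hHne hR₂ne hfold
      have hhead : G = H := by
        rcases hcase with ⟨hz1, hz2⟩ | ⟨hz1, hz2⟩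
        · have hZf : Z.Finite := finite_of_conc_eq hz1 hHf hGne
          rcases hHirr.2 G Z hGa hGf hZa hZf hz1.symm with h | h
          · exact h.symm
          · exfalso
            rw [h] at hz1
            have := wlen_conc hGne hZne
            rw [hz1, ← h] at this
            have hG0 : wlen G = 0 := by omega
            exact hGirr.1 (wlen_eq_zero hGa hGne hG0)
        · have hZf : Z.Finite := finite_of_conc_eq hz1 hGf hHne
          rcases hGirr.2 H Z hHa hHf hZa hZf hz1.symm with h | h
          · exact h
          · exfalso
            rw [h] at hz1
            have := wlen_conc hHne hZne
            rw [hz1, ← h] at this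
            have hH0 : wlen H = 0 := by omega
            exact hHirr.1 (wlen_eq_zero hHa hHne hH0)
      subst hhead
      have hRR : t₁.foldr conc ({([] : List A)} : Set (List A)) =
          t₂.foldr conc ({([] : List A)} : Set (List A)) :=
        conc_left_cancel hGne (conc_anti hGa hR₁a) hfold
      rw [IH t₂ ht₁ ht₂ hRR]

end AntiStuff

/-- The monoids of non-empty antichains and of non-empty finite antichains are free:
unique factorization into irreducibles (neutral element `{□}`). -/
theorem stmt18 {A : Type*} [PartialOrder A] :
    (∀ U : Set (List A), IsAnti U → U.Nonempty →
      ∃! l : List (Set (List A)),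
        (∀ G ∈ l, IsAnti G ∧ G.Nonempty ∧ IrredAnti G) ∧
        l.foldr conc ({([] : List A)} : Set (List A)) = U) ∧
    (∀ U : Set (List A), IsAnti U → U.Nonempty → U.Finite →
      ∃! l : List (Set (List A)),
        (∀ G ∈ l, IsAnti G ∧ G.Nonempty ∧ G.Finite ∧ IrredFinAnti G) ∧
        l.foldr conc ({([] : List A)} : Set (List A)) = U) := by
  constructor
  · intro U hUa hUne
    obtain ⟨l, hl, hlf⟩ := exists_fact (wlen U) U hUa hUne rfl
    refine ⟨l, ⟨hl, hlf⟩, ?_⟩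
    rintro l' ⟨hl', hlf'⟩
    exact uniq_fact l' l hl' hl (by rw [hlf, hlf'])
  · intro U hUa hUne hUfin
    obtain ⟨l, hl, hlf⟩ := exists_fact_fin (wlen U) U hUa hUne hUfin rfl
    refine ⟨l, ⟨hl, hlf⟩, ?_⟩
    rintro l' ⟨hl', hlf'⟩
    exact uniq_fact_fin l' l hl' hl (by rw [hlf, hlf'])
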